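/- Suppose n agents have valuation functionals V_i(Y) = (1+b_i)H_{g_i}(Y) + c_i·E[Y] and there exist indices i, j with 1 + b_i + c_i ≠ 0 and (1 + b_i + c_i)(1 + b_j + c_j) ≤ 0. Then no Pareto optimal allocation exists: for every allocation Y = (Y₁,...,Yₙ) with ΣY_k = X and all V_k(Y_k) finite, there exists another allocation Z with ΣZ_k = X, V_k(Z_k) ≤ V_k(Y_k) for all k, and strict inequality for some k. -/
import Mathlib


/-- If the `1 + bᵢ + cᵢ` have different signs (or one is zero and another nonzero),
then no Pareto optimal allocation exists: every allocation can be strictly improved. -/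
theorem stmt_6 {Ω : Type*} (n : ℕ) (X : Ω → ℝ) (b c : Fin n → ℝ)
    (V : Fin n → (Ω → ℝ) → ℝ)
    (hcash : ∀ (k : Fin n) (Y : Ω → ℝ) (a : ℝ),
      V k (fun ω => Y ω + a) = V k Y + (1 + b k + c k) * a)
    (i j : Fin n) (hi : 1 + b i + c i ≠ 0)
    (hij : (1 + b i + c i) * (1 + b j + c j) ≤ 0) :
    ∀ Y : Fin n → Ω → ℝ, (∀ ω, ∑ k, Y k ω = X ω) →
      ∃ Z : Fin n → Ω → ℝ, (∀ ω, ∑ k, Z k ω = X ω) ∧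
        (∀ k, V k (Z k) ≤ V k (Y k)) ∧ ∃ k, V k (Z k) < V k (Y k) := by
  intro Y hY
  set s := 1 + b i + c i with hs
  set t := 1 + b j + c j with ht
  have hne : i ≠ j := by
    rintro rfl
    have hts : t = s := ht.trans hs.symm
    rw [hts] at hij
    rcases hi.lt_or_gt with h | h
    · nlinarith
    · nlinarith
  set a : ℝ := -s with ha
  set d : Fin n → ℝ := fun k => if k = i then a else if k = j then -a else 0 with hd
  refine ⟨fun k ω => Y k ω + d k, ?_, ?_, ?_⟩
  · intro ω
    have hsum : ∑ k, d k = 0 := by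
      have : ∀ k, d k = (if k = i then a else 0) + (if k = j then -a else 0) := by
        intro k
        by_cases h1 : k = i
        · subst h1; simp [hd, if_neg hne]
        · simp [hd, h1]
      simp only [this, Finset.sum_add_distrib, Finset.sum_ite_eq', Finset.mem_univ, if_true]
      ring
    rw [Finset.sum_add_distrib, hY ω, hsum, add_zero]
  · intro k
    rw [hcash k (Y k) (d k)]
    by_cases h1 : k = i
    · subst h1
      simp only [hd, if_pos rfl, ha, ← hs]
      nlinarith [sq_nonneg s]
    · by_cases h2 : k = j
      · subst h2
        simp only [hd, if_neg h1, if_pos rfl, ha, ← ht, neg_neg, if_true, eq_self_iff_true]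
        nlinarith
      · simp [hd, h1, h2]
  · refine ⟨i, ?_⟩
    rw [hcash i (Y i) (d i)]
    simp only [hd, if_pos rfl, ha, ← hs]
    have hss : 0 < s * s := by
      rcases hi.lt_or_gt with h | h
      · nlinarith
      · nlinarith
    nlinarith
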